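/- Let Δ and Θ be distributions over a set S and let R ⊆ S × S be an equivalence relation. Then Δ R† Θ if and only if Δ(C) = Θ(C) for every equivalence class C ∈ S/R, where Δ(C) denotes the accumulation probability Σ_{s∈C} Δ(s). -/

import Mathlib

open scoped Classical

/-- A (discrete) probability distribution over a finite set `S`. -/
structure FDist (S : Type*) [Fintype S] where
  f : S → ℝ
  nonneg : ∀ s, 0 ≤ f s
  sum_one : ∑ s, f s = 1

/-- The point distribution at `s`. -/
noncomputable def FDist.point {S : Type*} [Fintype S] (s : S) : FDist S where
  f := fun u => if u = s then 1 else 0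
  nonneg := by intro u; show 0 ≤ (if u = s then (1 : ℝ) else 0); split <;> norm_num
  sum_one := by simp

/-- The lifting `R†` of a relation to distributions: the smallest relation
relating point distributions of related states and closed under convex
combinations. -/
inductive Lift {S T : Type*} [Fintype S] [Fintype T] (R : S → T → Prop) :
    FDist S → FDist T → Prop
  | point {s : S} {t : T} :
      R s t → Lift R (FDist.point s) (FDist.point t)
  | convex (I : Finset ℕ) (p : ℕ → ℝ)
      (hp : ∀ i ∈ I, 0 ≤ p i) (hsum : ∑ i ∈ I, p i = 1)
      (Δs : ℕ → FDist S) (Θs : ℕ → FDist T)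
      (h : ∀ i ∈ I, Lift R (Δs i) (Θs i))
      (Δ : FDist S) (Θ : FDist T)
      (hΔ : Δ.f = ∑ i ∈ I, p i • (Δs i).f)
      (hΘ : Θ.f = ∑ i ∈ I, p i • (Θs i).f) :
      Lift R Δ Θ

/-- For an equivalence relation `R`, `Δ R† Θ` iff `Δ` and `Θ` assign the same
accumulation probability to every equivalence class (the class of `s` being
`{t | R s t}`). -/
theorem lift_iff_classes {S : Type*} [Fintype S]
    (R : S → S → Prop) (hR : Equivalence R) (Δ Θ : FDist S) :
    Lift R Δ Θ ↔
      ∀ s : S, (∑ t, if R s t then Δ.f t else 0) = ∑ t, if R s t then Θ.f t else 0 := by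
  classical
  constructor
  · intro hL
    induction hL with
    | @point a b hab =>
      intro s
      have key : ∀ c : S, (∑ t, if R s t then (FDist.point c).f t else 0)
          = if R s c then 1 else 0 := by
        intro c
        rw [Finset.sum_eq_single c]
        · simp [FDist.point]
        · intro t _ ht; simp [FDist.point, ht]
        · simp
      rw [key a, key b]
      by_cases hsa : R s a
      · rw [if_pos hsa, if_pos (hR.trans hsa hab)]
      · rw [if_neg hsa, if_neg (fun hsb => hsa (hR.trans hsb (hR.symm hab)))]
    | convex I p hp hsum Δs Θs h Δ Θ hΔ hΘ ih =>
      intro s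
      have key : ∀ (G : ℕ → FDist S) (D : FDist S),
          D.f = ∑ i ∈ I, p i • (G i).f →
          (∑ t, if R s t then D.f t else 0)
            = ∑ i ∈ I, p i * ∑ t, if R s t then (G i).f t else 0 := by
        intro G D hD
        rw [hD]
        have step : ∀ t : S, (if R s t then (∑ i ∈ I, p i • (G i).f) t else 0)
            = ∑ i ∈ I, if R s t then p i * (G i).f t else 0 := by
          intro t
          split
          · simp [Finset.sum_apply]
          · simp
        simp only [step]
        rw [Finset.sum_comm]
        apply Finset.sum_congr rfl
        intro i _
        rw [Finset.mul_sum]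
        apply Finset.sum_congr rfl
        intro t _
        rw [mul_ite, mul_zero]
      rw [key Δs Δ hΔ, key Θs Θ hΘ]
      exact Finset.sum_congr rfl fun i hi => by rw [ih i hi s]
  · intro hcl
    -- S is nonempty
    have hne : Nonempty S := by
      rcases isEmpty_or_nonempty S with hE | hN
      · have := Δ.sum_one
        rw [Finset.univ_eq_empty, Finset.sum_empty] at this
        norm_num at this
      · exact hN
    haveI : Inhabited S := Classical.inhabited_of_nonempty hne
    haveI : Encodable (S × S) := Fintype.toEncodable _
    -- class masses
    set m : S → ℝ := fun s => ∑ t ∈ Finset.univ.filter (fun t => R s t), Δ.f t with hm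
    have hclm : ∀ s, (∑ t ∈ Finset.univ.filter (fun t => R s t), Θ.f t) = m s := by
      intro s
      rw [hm]
      dsimp only
      rw [Finset.sum_filter, Finset.sum_filter]
      exact (hcl s).symm
    have hm0 : ∀ s, 0 ≤ m s := fun s =>
      Finset.sum_nonneg fun t _ => Δ.nonneg t
    have hfle : ∀ s, Δ.f s ≤ m s := by
      intro s
      apply Finset.single_le_sum (fun t _ => Δ.nonneg t)
      simp [hR.refl s]
    have hgle : ∀ s, Θ.f s ≤ m s := by
      intro s
      rw [← hclm s]
      apply Finset.single_le_sum (fun t _ => Θ.nonneg t)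
      simp [hR.refl s]
    have hmeq : ∀ s t, R s t → m s = m t := by
      intro s t hst
      apply Finset.sum_congr _ (fun _ _ => rfl)
      apply Finset.filter_congr
      intro u _
      exact ⟨fun h => hR.trans (hR.symm hst) h, fun h => hR.trans hst h⟩
    -- coupling weights
    set q : S × S → ℝ := fun x => if R x.1 x.2 then Δ.f x.1 * Θ.f x.2 / m x.1 else 0
      with hq
    have hq0 : ∀ x, 0 ≤ q x := by
      intro x
      rw [hq]
      dsimp only
      split
      · exact div_nonneg (mul_nonneg (Δ.nonneg _) (Θ.nonneg _)) (hm0 _)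
      · exact le_refl 0
    -- row marginal
    have hrow : ∀ u : S, (∑ t, q (u, t)) = Δ.f u := by
      intro u
      have : (∑ t, q (u, t)) = ∑ t ∈ Finset.univ.filter (fun t => R u t),
          Δ.f u * Θ.f t / m u := by
        rw [Finset.sum_filter]
      rw [this]
      rw [← Finset.sum_div, ← Finset.mul_sum, hclm u]
      by_cases hmu : m u = 0
      · have : Δ.f u = 0 := le_antisymm (hmu ▸ hfle u) (Δ.nonneg u)
        rw [this, hmu]; ring
      · field_simp
    -- column marginal
    have hcol : ∀ v : S, (∑ s, q (s, v)) = Θ.f v := by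
      intro v
      have e1 : (∑ s, q (s, v)) = ∑ s ∈ Finset.univ.filter (fun s => R v s),
          Δ.f s * Θ.f v / m v := by
        rw [Finset.sum_filter]
        apply Finset.sum_congr rfl
        intro s _
        rw [hq]
        dsimp only
        by_cases hsv : R s v
        · rw [if_pos hsv, if_pos (hR.symm hsv), hmeq s v hsv]
        · rw [if_neg hsv, if_neg (fun h => hsv (hR.symm h))]
      rw [e1, ← Finset.sum_div, ← Finset.sum_mul]
      by_cases hmv : m v = 0
      · have : Θ.f v = 0 := le_antisymm (hmv ▸ hgle v) (Θ.nonneg v)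
        rw [this, hmv]; ring
      · rw [hm]
        exact mul_div_cancel_left₀ _ hmv
    -- the index set and data for convexity
    set dec : ℕ → S × S := fun i => (Encodable.decode i).getD default with hdec
    have hdec_enc : ∀ x : S × S, dec (Encodable.encode x) = x := by
      intro x
      rw [hdec]
      simp [Encodable.encodek]
    set P : Finset (S × S) := Finset.univ.filter (fun x => R x.1 x.2) with hP
    set I : Finset ℕ := P.image Encodable.encode with hI
    have hsumI : ∀ F : S × S → ℝ, (∑ i ∈ I, F (dec i)) = ∑ x ∈ P, F x := by
      intro F
      rw [hI, Finset.sum_image (by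
        intro x _ y _ hxy
        exact Encodable.encode_injective hxy)]
      exact Finset.sum_congr rfl fun x _ => by rw [hdec_enc x]
    have hqP : ∀ F : S × S → ℝ, (∑ x ∈ P, q x * F x) = ∑ x : S × S, q x * F x := by
      intro F
      rw [hP, Finset.sum_filter]
      apply Finset.sum_congr rfl
      intro x _
      by_cases hx : R x.1 x.2
      · rw [if_pos hx]
      · rw [if_neg hx, hq]
        dsimp only
        rw [if_neg hx, zero_mul]
    have hqP1 : (∑ x ∈ P, q x) = ∑ x : S × S, q x := by
      have := hqP (fun _ => 1)
      simpa using this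
    refine Lift.convex I (fun i => q (dec i)) ?_ ?_
      (fun i => FDist.point (dec i).1) (fun i => FDist.point (dec i).2) ?_ Δ Θ ?_ ?_
    · intro i _
      exact hq0 _
    · rw [hsumI q, hqP1, Fintype.sum_prod_type]
      calc (∑ s : S, ∑ t : S, q (s, t)) = ∑ s : S, Δ.f s := by
            exact Finset.sum_congr rfl fun s _ => hrow s
        _ = 1 := Δ.sum_one
    · intro i hi
      rw [hI] at hi
      obtain ⟨x, hxP, hxi⟩ := Finset.mem_image.mp hi
      rw [hP, Finset.mem_filter] at hxP
      have hx : dec i = x := by rw [← hxi, hdec_enc]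
      show Lift R (FDist.point (dec i).1) (FDist.point (dec i).2)
      rw [hx]
      exact Lift.point hxP.2
    · funext u
      rw [Finset.sum_apply]
      have ea : (∑ i ∈ I, (q (dec i) • (FDist.point (dec i).1).f) u)
          = ∑ x ∈ P, q x * (FDist.point x.1).f u :=
        hsumI (fun x => q x * (FDist.point x.1).f u)
      have eb : (∑ x ∈ P, q x * (FDist.point x.1).f u)
          = ∑ x : S × S, q x * (FDist.point x.1).f u :=
        hqP (fun x => (FDist.point x.1).f u)
      rw [ea, eb, Fintype.sum_prod_type]
      have e2 : ∀ s : S, (∑ t : S, q (s, t) * (FDist.point s).f u)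
          = (if u = s then 1 else 0) * ∑ t : S, q (s, t) := by
        intro s
        rw [Finset.mul_sum]
        apply Finset.sum_congr rfl
        intro t _
        rw [FDist.point]
        ring
      simp only [e2]
      rw [Finset.sum_eq_single u]
      · rw [if_pos rfl, one_mul, hrow u]
      · intro s _ hsu
        rw [if_neg (fun h => hsu h.symm), zero_mul]
      · simp
    · funext u
      rw [Finset.sum_apply]
      have ea : (∑ i ∈ I, (q (dec i) • (FDist.point (dec i).2).f) u)
          = ∑ x ∈ P, q x * (FDist.point x.2).f u :=
        hsumI (fun x => q x * (FDist.point x.2).f u)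
      have eb : (∑ x ∈ P, q x * (FDist.point x.2).f u)
          = ∑ x : S × S, q x * (FDist.point x.2).f u :=
        hqP (fun x => (FDist.point x.2).f u)
      rw [ea, eb, Fintype.sum_prod_type_right]
      have e2 : ∀ t : S, (∑ s : S, q (s, t) * (FDist.point t).f u)
          = (if u = t then 1 else 0) * ∑ s : S, q (s, t) := by
        intro t
        rw [Finset.mul_sum]
        apply Finset.sum_congr rfl
        intro s _
        rw [FDist.point]
        ring
      simp only [e2]
      rw [Finset.sum_eq_single u]
      · rw [if_pos rfl, one_mul, hcol u]
      · intro t _ htu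
        rw [if_neg (fun h => htu h.symm), zero_mul]
      · simp
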